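/- Let $1<p<q$ and define $F:\mathbb{R}\to\mathbb{R}$ by $F(0)=0$, $F(t)=\frac{|t|^q}{q}\ln|t|$ for $0<|t|<1$, $F(t)=\frac{|t|^p}{q}\ln|t|$ for $|t|\ge 1$, and let $f = F'$. Then $\lim_{|t|\to\infty} F(t)/|t|^p = \infty$ but there is no $\mu > p$ and $T>0$ such that $0 < \mu F(t) \le f(t)t$ for all $|t| \ge T$ (i.e., the Ambrosetti–Rabinowitz condition fails). -/

import Mathlib

open Filter Real

theorem stmt_7 (p q : ℝ) (hp : 1 < p) (hpq : p < q)
    (F : ℝ → ℝ)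
    (hF : ∀ t : ℝ, F t =
      if t = 0 then 0
      else if |t| < 1 then |t| ^ q / q * Real.log |t|
      else |t| ^ p / q * Real.log |t|)
    (f : ℝ → ℝ) (hf : f = deriv F) :
    (Filter.Tendsto (fun t : ℝ => F t / |t| ^ p)
        (Filter.comap (fun t : ℝ => |t|) Filter.atTop) Filter.atTop) ∧
    ¬ ∃ μ > p, ∃ T > 0, ∀ t : ℝ, T ≤ |t| → 0 < μ * F t ∧ μ * F t ≤ f t * t := by
  have hq0 : 0 < q := by linarith
  constructor
  · have h1 : Tendsto (fun t : ℝ => Real.log |t| / q)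
        (Filter.comap (fun t : ℝ => |t|) Filter.atTop) Filter.atTop :=
      (Real.tendsto_log_atTop.atTop_div_const hq0).comp tendsto_comap
    refine h1.congr' ?_
    have hmem : {t : ℝ | 1 ≤ |t|} ∈ Filter.comap (fun t : ℝ => |t|) Filter.atTop :=
      Filter.preimage_mem_comap (Filter.eventually_ge_atTop 1)
    filter_upwards [hmem] with t ht
    have ht0 : t ≠ 0 := by
      intro h; rw [h] at ht; simp at ht; linarith
    have hpow : |t| ^ p ≠ 0 := ne_of_gt (Real.rpow_pos_of_pos (abs_pos.2 ht0) p)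
    rw [hF t, if_neg ht0, if_neg (not_lt.2 ht)]
    field_simp
  · rintro ⟨μ, hμ, T, hT, hcond⟩
    have hμp : 0 < μ - p := by linarith
    set t₀ := max T (Real.exp (2 / (μ - p))) with ht₀def
    have hexp1 : 1 < Real.exp (2 / (μ - p)) := by
      have h2 : 0 < 2 / (μ - p) := by positivity
      have := Real.add_one_le_exp (2 / (μ - p))
      linarith
    have ht1 : 1 < t₀ := lt_of_lt_of_le hexp1 (le_max_right _ _)
    have ht0pos : 0 < t₀ := by linarith
    have habs : |t₀| = t₀ := abs_of_pos ht0pos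
    have hlog : 2 / (μ - p) ≤ Real.log t₀ :=
      (Real.le_log_iff_exp_le ht0pos).2 (le_max_right _ _)
    obtain ⟨hpos, hle⟩ := hcond t₀ (by rw [habs]; exact le_max_left _ _)
    -- compute F t₀
    have hF0 : F t₀ = t₀ ^ p * Real.log t₀ / q := by
      rw [hF, if_neg (ne_of_gt ht0pos), if_neg (by rw [habs]; linarith), habs]
      ring
    -- compute deriv F t₀
    have hderiv : deriv F t₀ = (p * t₀ ^ (p - 1) * Real.log t₀ + t₀ ^ p * t₀⁻¹) / q := by
      have hop : IsOpen {x : ℝ | 1 < x} := isOpen_lt continuous_const continuous_id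
      have hnhds : {x : ℝ | 1 < x} ∈ nhds t₀ := hop.mem_nhds ht1
      have heq : F =ᶠ[nhds t₀] fun x => x ^ p * Real.log x / q := by
        filter_upwards [hnhds] with x hx
        have hxpos : 0 < x := by linarith [hx]
        rw [hF, if_neg (ne_of_gt hxpos), if_neg (by rw [abs_of_pos hxpos]; linarith [hx]),
          abs_of_pos hxpos]
        ring
      rw [heq.deriv_eq]
      have h1 : HasDerivAt (fun x : ℝ => x ^ p * Real.log x)
          (p * t₀ ^ (p - 1) * Real.log t₀ + t₀ ^ p * t₀⁻¹) t₀ := by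
        have ha : HasDerivAt (fun x : ℝ => x ^ p) (p * t₀ ^ (p - 1)) t₀ := by
          have := Real.hasDerivAt_rpow_const (x := t₀) (p := p) (Or.inl (ne_of_gt ht0pos))
          simpa [mul_comm] using this
        exact ha.mul (Real.hasDerivAt_log (ne_of_gt ht0pos))
      exact (h1.div_const q).deriv
    rw [hf, hderiv, hF0] at hle
    have hA : 0 < t₀ ^ p := Real.rpow_pos_of_pos ht0pos p
    have hrw : t₀ ^ (p - 1) = t₀ ^ p / t₀ := by
      rw [Real.rpow_sub ht0pos, Real.rpow_one]
    rw [hrw] at hle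
    have hL : (μ - p) * Real.log t₀ ≥ 2 := by
      rw [ge_iff_le, ← div_le_iff₀' hμp]
      exact hlog
    have hle' : μ * (t₀ ^ p * Real.log t₀) ≤ p * (t₀ ^ p) * Real.log t₀ + t₀ ^ p := by
      have h : μ * (t₀ ^ p * Real.log t₀) / q ≤ (p * (t₀ ^ p) * Real.log t₀ + t₀ ^ p) / q := by
        calc μ * (t₀ ^ p * Real.log t₀) / q = μ * (t₀ ^ p * Real.log t₀ / q) := by ring
          _ ≤ (p * (t₀ ^ p / t₀) * Real.log t₀ + t₀ ^ p * t₀⁻¹) / q * t₀ := hle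
          _ = (p * (t₀ ^ p) * Real.log t₀ + t₀ ^ p) / q := by field_simp
      have h2 := (div_le_div_iff₀ hq0 hq0).1 h
      exact le_of_mul_le_mul_right h2 hq0
    nlinarith [hL, hA, hle']
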